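/- Let p be a prime and F a field. Let F'|F be a cyclic extension of degree dividing p−1 and L|F' a cyclic extension of degree p. If L|F is Galois, then there exists a degree-p extension E|F with L = EF'; any two such E are conjugate over F, and every F-conjugate of E is contained in L. -/

import Mathlib

open Subgroup MulAction MulOpposite
open scoped Pointwise

noncomputable def auxMkQD {G : Type*} [Group G] (N : Subgroup G) [IsMulCommutative N]
    [N.FiniteIndex] (T : N.LeftTransversal) : N.QuotientDiff :=
  Quotient.mk'' T

lemma auxMkQD_smul {G : Type*} [Group G] (N : Subgroup G) [IsMulCommutative N]
    [N.FiniteIndex] [N.Normal] (g : G) (T : N.LeftTransversal) :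
    g • auxMkQD N T = auxMkQD N ((op g⁻¹ : Gᵐᵒᵖ) • T) := rfl

/-- Conjugacy of complements of an abelian normal subgroup (Schur–Zassenhaus, abelian case). -/
theorem aux_complement_conj {G : Type*} [Group G] [Finite G] {N K K' : Subgroup G} [N.Normal]
    [IsMulCommutative N] (hco : Nat.Coprime (Nat.card N) N.index)
    (h : IsComplement' N K) (h' : IsComplement' N K') :
    ∃ g : G, K' = (MulAut.conj g) • K := by
  haveI : N.FiniteIndex := ⟨N.index_ne_zero_of_finite⟩
  have hmem : ∀ {M : Subgroup G}, IsComplement' N M →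
      IsComplement (M : Set G) (N : Set G) := fun hM => hM.symm
  have key : ∀ (M : Subgroup G) (hM : IsComplement' N M),
      M = stabilizer G (auxMkQD N ⟨(M : Set G), hmem hM⟩) := by
    intro M hM
    set T : N.LeftTransversal := ⟨(M : Set G), hmem hM⟩ with hT
    have hle : M ≤ stabilizer G (auxMkQD N T) := by
      intro m hm
      have hsmul : (op m⁻¹ : Gᵐᵒᵖ) • T = T := by
        apply Subtype.ext
        show (op m⁻¹ : Gᵐᵒᵖ) • (M : Set G) = (M : Set G)
        ext x
        constructor
        · rintro ⟨y, hy, rfl⟩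
          exact M.mul_mem hy (M.inv_mem hm)
        · intro hx
          exact ⟨x * m, M.mul_mem hx hm, by
            simp [MulOpposite.smul_eq_mul_unop, mul_assoc]⟩
      show m • auxMkQD N T = auxMkQD N T
      rw [auxMkQD_smul, hsmul]
    have hcard : Nat.card (stabilizer G (auxMkQD N T)) ≤ Nat.card M := by
      have h1 := (isComplement'_stabilizer_of_coprime hco (α := auxMkQD N T)).card_mul
      have h2 := hM.card_mul
      have hNpos : 0 < Nat.card N := Nat.card_pos
      exact le_of_eq (Nat.eq_of_mul_eq_mul_left hNpos (h1.trans h2.symm))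
    exact Subgroup.eq_of_le_of_card_ge hle hcard
  obtain ⟨n, hn⟩ := Subgroup.exists_smul_eq hco
    (auxMkQD N ⟨(K : Set G), hmem h⟩) (auxMkQD N ⟨(K' : Set G), hmem h'⟩)
  have hn' : (n : G) • (auxMkQD N ⟨(K : Set G), hmem h⟩) = auxMkQD N ⟨(K' : Set G), hmem h'⟩ := hn
  refine ⟨(n : G), ?_⟩
  rw [key K' h', key K h, ← hn',
    MulAction.stabilizer_smul_eq_stabilizer_map_conj, Subgroup.pointwise_smul_def]
  rfl

/-- The trivial isomorphism between `extendScalars` and the original field, over the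
bottom base field. -/
def auxExtEquiv {F Ω : Type*} [Field F] [Field Ω] [Algebra F Ω]
    {F' L : IntermediateField F Ω} (hFL : F' ≤ L) :
    ↥(IntermediateField.extendScalars hFL) ≃ₐ[F] ↥L where
  toFun x := ⟨x.1, x.2⟩
  invFun x := ⟨x.1, x.2⟩
  left_inv _ := rfl
  right_inv _ := rfl
  map_mul' _ _ := rfl
  map_add' _ _ := rfl
  commutes' _ := rfl

set_option maxHeartbeats 2000000 in
set_option synthInstance.maxHeartbeats 1000000 in
/-- let `F'|F` be cyclic of degree dividing `p−1` and `L|F'` cyclic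
of degree `p` (inside an algebraic closure `Ω` of `F`).  If `L|F` is Galois,
then there is a degree-`p` extension `E|F` with `L = E F'`; any two such `E` are
conjugate over `F`, and every `F`-conjugate of `E` is contained in `L`. -/
theorem stmt_11 (p : ℕ) (hp : p.Prime)
    (F Ω : Type) [Field F] [Field Ω] [Algebra F Ω]
    [IsAlgClosed Ω] [Algebra.IsAlgebraic F Ω]
    (F' L : IntermediateField F Ω) (hFL : F' ≤ L)
    [IsGalois F ↥F'] (hcyc' : IsCyclic (↥F' ≃ₐ[F] ↥F'))
    (hdeg' : Module.finrank F ↥F' ∣ p - 1)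
    (hLgal' : IsGalois ↥F' ↥(IntermediateField.extendScalars hFL))
    (hLcyc : IsCyclic (↥(IntermediateField.extendScalars hFL) ≃ₐ[↥F']
      ↥(IntermediateField.extendScalars hFL)))
    (hLdeg : Module.finrank ↥F' ↥(IntermediateField.extendScalars hFL) = p)
    (hGal : IsGalois F ↥L) :
    ∃ E : IntermediateField F Ω, Module.finrank F ↥E = p ∧ E ⊔ F' = L ∧
      (∀ E' : IntermediateField F Ω, Module.finrank F ↥E' = p → E' ⊔ F' = L →
        ∃ σ : Ω ≃ₐ[F] Ω, E' = E.map σ.toAlgHom) ∧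
      (∀ σ : ↥E →ₐ[F] Ω, σ.fieldRange ≤ L) := by
  classical
  haveI := Fact.mk hp
  set d := Module.finrank F ↥F' with hd
  have hp1 : 0 < p - 1 := by have := hp.two_le; omega
  have hd0 : 0 < d := by
    rcases Nat.eq_zero_or_pos d with h | h
    · rw [h] at hdeg'; rw [zero_dvd_iff] at hdeg'; omega
    · exact h
  haveI : FiniteDimensional F ↥F' := FiniteDimensional.of_finrank_pos hd0
  haveI : FiniteDimensional ↥F' ↥(IntermediateField.extendScalars hFL) :=
    FiniteDimensional.of_finrank_pos (by rw [hLdeg]; exact hp.pos)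
  haveI : FiniteDimensional F ↥(IntermediateField.extendScalars hFL) :=
    FiniteDimensional.trans F ↥F' ↥(IntermediateField.extendScalars hFL)
  haveI : FiniteDimensional F ↥L := Module.Finite.equiv (auxExtEquiv hFL).toLinearEquiv
  have hrankL : Module.finrank F ↥L = d * p := by
    have h1 : Module.finrank F ↥F' * Module.finrank ↥F' ↥(IntermediateField.extendScalars hFL) =
        Module.finrank F ↥(IntermediateField.extendScalars hFL) :=
      Module.finrank_mul_finrank F ↥F' ↥(IntermediateField.extendScalars hFL)
    rw [(auxExtEquiv hFL).toLinearEquiv.finrank_eq] at h1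
    rw [← h1, hLdeg]
  -- move to intermediate fields of `L`
  set Fr : IntermediateField F ↥L := IntermediateField.restrict hFL with hFr
  have hFrd : Module.finrank F ↥Fr = d :=
    ((IntermediateField.restrict_algEquiv hFL).toLinearEquiv.finrank_eq).symm
  haveI : IsGalois F ↥Fr := IsGalois.of_algEquiv (IntermediateField.restrict_algEquiv hFL)
  have hFrL : Module.finrank ↥Fr ↥L = p := by
    have h1 : Module.finrank F ↥Fr * Module.finrank ↥Fr ↥L = Module.finrank F ↥L :=
      Module.finrank_mul_finrank F ↥Fr ↥L
    rw [hFrd, hrankL] at h1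
    exact Nat.eq_of_mul_eq_mul_left hd0 h1
  set N : Subgroup (↥L ≃ₐ[F] ↥L) := Fr.fixingSubgroup with hNdef
  haveI hNnormal : N.Normal := IsGalois.fixingSubgroup_normal_of_isGalois Fr
  have hNcard : Nat.card N = p := by
    rw [hNdef, IsGalois.card_fixingSubgroup_eq_finrank, hFrL]
  have hGcard : Nat.card (↥L ≃ₐ[F] ↥L) = d * p := by
    rw [IsGalois.card_aut_eq_finrank, hrankL]
  have hNindex : N.index = d := by
    have h1 := N.card_mul_index
    rw [hNcard, hGcard, mul_comm d p] at h1
    exact Nat.eq_of_mul_eq_mul_left hp.pos h1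
  have hpd : Nat.Coprime p d := by
    refine hp.coprime_iff_not_dvd.mpr fun hdvd => ?_
    have h2 : p ∣ p - 1 := hdvd.trans hdeg'
    have := Nat.le_of_dvd hp1 h2
    omega
  have hco : Nat.Coprime (Nat.card N) N.index := by rw [hNcard, hNindex]; exact hpd
  haveI : IsCyclic N := isCyclic_of_prime_card hNcard
  haveI : IsMulCommutative N := by
    letI : CommGroup N := IsCyclic.commGroup
    exact ⟨⟨fun a b => mul_comm a b⟩⟩
  -- Schur–Zassenhaus
  obtain ⟨H, hH⟩ := Subgroup.exists_right_complement'_of_coprime hco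
  have hHcard : Nat.card H = d := by
    have h1 := hH.card_mul
    rw [hNcard, hGcard, mul_comm d p] at h1
    exact Nat.eq_of_mul_eq_mul_left hp.pos h1
  set E0 : IntermediateField F ↥L := IntermediateField.fixedField H with hE0def
  have hE0L : Module.finrank ↥E0 ↥L = d := by
    rw [hE0def, IntermediateField.finrank_fixedField_eq_card, hHcard]
  have hE0d : Module.finrank F ↥E0 = p := by
    have h1 : Module.finrank F ↥E0 * Module.finrank ↥E0 ↥L = Module.finrank F ↥L :=
      Module.finrank_mul_finrank F ↥E0 ↥L
    rw [hE0L, hrankL, mul_comm d p] at h1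
    exact Nat.eq_of_mul_eq_mul_right hd0 h1
  -- antitonicity and sup formula for fixing subgroups
  have hmono : ∀ {A B : IntermediateField F ↥L}, A ≤ B → B.fixingSubgroup ≤ A.fixingSubgroup := by
    intro A B hAB
    exact (IntermediateField.le_iff_le _ _).mp
      (hAB.trans ((IntermediateField.le_iff_le _ _).mpr le_rfl))
  have hfix_sup : ∀ A B : IntermediateField F ↥L,
      (A ⊔ B).fixingSubgroup = A.fixingSubgroup ⊓ B.fixingSubgroup := by
    intro A B
    refine le_antisymm (le_inf (hmono le_sup_left) (hmono le_sup_right)) ?_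
    exact (IntermediateField.le_iff_le _ _).mp
      (sup_le ((IntermediateField.le_iff_le _ _).mpr inf_le_left)
        ((IntermediateField.le_iff_le _ _).mpr inf_le_right))
  have hfixE0 : E0.fixingSubgroup = H := IntermediateField.fixingSubgroup_fixedField H
  have hfixedbot : IntermediateField.fixedField (⊥ : Subgroup (↥L ≃ₐ[F] ↥L)) = ⊤ := by
    refine le_antisymm le_top fun x _ => ?_
    rintro ⟨g, hg⟩
    rw [Subgroup.mem_bot] at hg
    subst hg
    rfl
  have hsup0 : E0 ⊔ Fr = ⊤ := by
    have h2 := IsGalois.fixedField_fixingSubgroup (E0 ⊔ Fr)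
    rw [hfix_sup, hfixE0, ← hNdef, hH.disjoint.symm.eq_bot, hfixedbot] at h2
    exact h2.symm
  have hliftsup : ∀ A B : IntermediateField F ↥L,
      IntermediateField.lift (A ⊔ B) = IntermediateField.lift A ⊔ IntermediateField.lift B :=
    fun A B => IntermediateField.map_sup A B L.val
  have hEsup : IntermediateField.lift E0 ⊔ F' = L := by
    calc IntermediateField.lift E0 ⊔ F'
        = IntermediateField.lift E0 ⊔ IntermediateField.lift Fr := by
          rw [hFr, IntermediateField.lift_restrict]
      _ = IntermediateField.lift (E0 ⊔ Fr) := (hliftsup E0 Fr).symm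
      _ = IntermediateField.lift ⊤ := by rw [hsup0]
      _ = L := IntermediateField.lift_top F L
  have hEdeg : Module.finrank F ↥(IntermediateField.lift E0) = p := by
    rw [← hE0d]
    exact ((IntermediateField.liftAlgEquiv E0).toLinearEquiv.finrank_eq).symm
  have hEL : IntermediateField.lift E0 ≤ L := IntermediateField.lift_le E0
  haveI : Normal F ↥L := hGal.to_normal
  haveI : IsAlgClosure F Ω := ⟨inferInstance, inferInstance⟩
  refine ⟨IntermediateField.lift E0, hEdeg, hEsup, ?_, ?_⟩
  · -- conjugacy
    intro E' hE'deg hE'sup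
    have hE'L : E' ≤ L := le_sup_left.trans_eq hE'sup
    set E0' : IntermediateField F ↥L := IntermediateField.restrict hE'L with hE0'def
    have hliftE0' : IntermediateField.lift E0' = E' := IntermediateField.lift_restrict hE'L
    have hE0'deg : Module.finrank F ↥E0' = p := by
      rw [← hE'deg]
      exact ((IntermediateField.restrict_algEquiv hE'L).toLinearEquiv.finrank_eq).symm
    set H' : Subgroup (↥L ≃ₐ[F] ↥L) := E0'.fixingSubgroup with hH'def
    have hH'card : Nat.card H' = d := by
      have h1 : Nat.card H' = Module.finrank ↥E0' ↥L := by
        rw [hH'def, IsGalois.card_fixingSubgroup_eq_finrank]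
      have h2 : Module.finrank F ↥E0' * Module.finrank ↥E0' ↥L = Module.finrank F ↥L :=
        Module.finrank_mul_finrank F ↥E0' ↥L
      rw [hE0'deg, hrankL] at h2
      rw [h1]
      exact Nat.eq_of_mul_eq_mul_left hp.pos (h2.trans (mul_comm d p))
    have hcompl' : IsComplement' N H' :=
      Subgroup.isComplement'_of_coprime
        (by rw [hNcard, hH'card, hGcard, mul_comm]) (by rw [hNcard, hH'card]; exact hpd)
    obtain ⟨g, hg⟩ := aux_complement_conj hco hH hcompl'
    have hmapfix : (E0.map (g : ↥L →ₐ[F] ↥L)).fixingSubgroup = H' := by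
      rw [IsGalois.map_fixingSubgroup, hfixE0, ← hg]
    have hmapeq : E0.map (g : ↥L →ₐ[F] ↥L) = E0' := by
      have h1 := IsGalois.fixedField_fixingSubgroup (E0.map (g : ↥L →ₐ[F] ↥L))
      rw [hmapfix] at h1
      have h2 : IntermediateField.fixedField H' = E0' := by
        rw [hH'def]; exact IsGalois.fixedField_fixingSubgroup E0'
      exact h1.symm.trans h2
    refine ⟨g.liftNormal Ω, ?_⟩
    rw [← hliftE0', ← hmapeq]
    apply SetLike.coe_injective
    show (L.val '' ((g : ↥L →ₐ[F] ↥L) '' (E0 : Set ↥L))) =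
      ((g.liftNormal Ω).toAlgHom '' (L.val '' (E0 : Set ↥L)))
    rw [← Set.image_comp, ← Set.image_comp]
    apply Set.image_congr
    intro a _
    show L.val ((g : ↥L →ₐ[F] ↥L) a) = (g.liftNormal Ω).toAlgHom (L.val a)
    have h1 : (algebraMap (↥L) Ω) ((g : ↥L →ₐ[F] ↥L) a) =
        (g.liftNormal Ω) ((algebraMap (↥L) Ω) a) := (AlgEquiv.liftNormal_commutes g Ω a).symm
    exact h1
  · -- every conjugate lies in L
    intro σ x hx
    obtain ⟨y, rfl⟩ := hx
    have h1 := AlgHom.liftNormal_commutes σ Ω y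
    have hyL : ((y : Ω)) ∈ L := hEL y.2
    have h2 := AlgHom.restrictNormal_commutes (σ.liftNormal Ω) ↥L ⟨(y : Ω), hyL⟩
    show σ y ∈ L
    have e1 : σ y = (σ.liftNormal Ω) ((algebraMap (↥(IntermediateField.lift E0)) Ω) y) := by
      rw [h1]; rfl
    have e2 : (algebraMap (↥(IntermediateField.lift E0)) Ω) y =
        (algebraMap (↥L) Ω) (⟨(y : Ω), hyL⟩ : ↥L) := rfl
    rw [e1, e2, ← h2]
    have e3 : ∀ z : ↥L, (algebraMap (↥L) Ω) z = (z : Ω) := fun z => rfl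
    rw [e3]
    exact SetLike.coe_mem _
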